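/- For z ∈ ℂ \ [-1,1] and m ≥ 0, P_m(z) := (1/2π)∫₀^{2π} cos(mφ)/(z-cos φ) dφ equals (z - √(z²-1))^m / √(z²-1), where √(z²-1) = √(z+1)√(z-1) with principal branches; in particular P_m(z) → 0 as m → ∞ for each fixed z ∈ ℂ \ [-1,1]. -/

import Mathlib

open MeasureTheory Filter

section AuxPClosedForm
open Complex

lemma aux_sqrt_sq {a : ℂ} (ha : a ≠ 0) : (a ^ ((1:ℂ)/2)) * (a ^ ((1:ℂ)/2)) = a := by
  rw [← Complex.cpow_add _ _ ha]
  norm_num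

lemma aux_sqrt_pos_im {a : ℂ} (ha : 0 < a.im) :
    0 < (a ^ ((1:ℂ)/2)).re ∧ 0 < (a ^ ((1:ℂ)/2)).im := by
  have ha0 : a ≠ 0 := by
    intro h; rw [h] at ha; simp at ha
  have harg1 : 0 < a.arg := by
    rcases (Complex.arg_nonneg_iff.mpr ha.le).lt_or_eq with h | h
    · exact h
    · exfalso
      have := Complex.arg_eq_zero_iff.mp h.symm
      linarith [this.2]
  have harg2 : a.arg < Real.pi := by
    rcases (Complex.arg_le_pi a).lt_or_eq with h | h
    · exact h
    · exfalso
      have := Complex.arg_eq_pi_iff.mp h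
      linarith [this.2]
  rw [Complex.cpow_def_of_ne_zero ha0]
  rw [Complex.exp_re, Complex.exp_im]
  have him : (Complex.log a * (1/2)).im = a.arg / 2 := by
    simp [Complex.log_im]; ring
  rw [him]
  have hcos : 0 < Real.cos (a.arg / 2) := by
    apply Real.cos_pos_of_mem_Ioo
    constructor <;> [linarith [Real.pi_pos]; linarith]
  have hsin : 0 < Real.sin (a.arg / 2) := by
    apply Real.sin_pos_of_pos_of_lt_pi <;> linarith [Real.pi_pos]
  constructor <;> positivity

lemma aux_sqrt_neg_im {a : ℂ} (ha : a.im < 0) :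
    0 < (a ^ ((1:ℂ)/2)).re ∧ (a ^ ((1:ℂ)/2)).im < 0 := by
  have ha0 : a ≠ 0 := by
    intro h; rw [h] at ha; simp at ha
  have harg1 : a.arg < 0 := by
    by_contra h
    push_neg at h
    have := Complex.arg_nonneg_iff.mp h
    linarith
  have harg2 : -Real.pi < a.arg := Complex.neg_pi_lt_arg a
  rw [Complex.cpow_def_of_ne_zero ha0]
  rw [Complex.exp_re, Complex.exp_im]
  have him : (Complex.log a * (1/2)).im = a.arg / 2 := by
    simp [Complex.log_im]; ring
  rw [him]
  have hcos : 0 < Real.cos (a.arg / 2) := by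
    apply Real.cos_pos_of_mem_Ioo
    constructor <;> linarith [Real.pi_pos]
  have hsin : Real.sin (a.arg / 2) < 0 := by
    have h1 : 0 < Real.sin (-(a.arg / 2)) := by
      apply Real.sin_pos_of_pos_of_lt_pi <;> linarith [Real.pi_pos]
    rw [Real.sin_neg] at h1
    linarith
  constructor
  · positivity
  · have : 0 < Real.exp ((Complex.log a * (1/2)).re) := Real.exp_pos _
    nlinarith

lemma aux_re_pos (z : ℂ) (hz : ¬(z.im = 0 ∧ -1 ≤ z.re ∧ z.re ≤ 1)) :
    0 < z.re * ((z+1)^((1:ℂ)/2)*(z-1)^((1:ℂ)/2)).re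
      + z.im * ((z+1)^((1:ℂ)/2)*(z-1)^((1:ℂ)/2)).im := by
  have hp1 : z + 1 ≠ 0 := by
    intro h
    have : z = -1 := by linear_combination h
    apply hz; rw [this]; norm_num
  have hm1 : z - 1 ≠ 0 := by
    intro h
    have : z = 1 := by linear_combination h
    apply hz; rw [this]; norm_num
  set u := (z+1)^((1:ℂ)/2) with hu_def
  set v := (z-1)^((1:ℂ)/2) with hv_def
  have hss : (u*v)*(u*v) = z*z - 1 := by
    have h1 := aux_sqrt_sq hp1
    have h2 := aux_sqrt_sq hm1
    calc (u*v)*(u*v) = (u*u)*(v*v) := by ring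
      _ = (z+1)*(z-1) := by rw [h1, h2]
      _ = z*z - 1 := by ring
  have him := congrArg Complex.im hss
  simp only [Complex.mul_im, Complex.sub_im, Complex.one_im, Complex.mul_re] at him
  have him' : (u.re*v.re - u.im*v.im) * (u.re*v.im + u.im*v.re) = z.re * z.im := by
    linarith
  simp only [Complex.mul_re, Complex.mul_im]
  set p := u.re*v.re - u.im*v.im with hp_def
  set q := u.re*v.im + u.im*v.re with hq_def
  have hEq : (z.re * p + z.im * q) * q = z.re^2*z.im + z.im * q^2 := by
    linear_combination z.re * him'
  rcases lt_trichotomy z.im 0 with hy | hy | hy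
  · -- im < 0
    have hu' := aux_sqrt_neg_im (a := z+1) (by simpa using hy)
    have hv' := aux_sqrt_neg_im (a := z-1) (by simpa using hy)
    rw [← hu_def] at hu'; rw [← hv_def] at hv'
    have hq : q < 0 := by rw [hq_def]; nlinarith [hu'.1, hu'.2, hv'.1, hv'.2]
    nlinarith [hEq, sq_nonneg z.re, sq_nonneg q, mul_pos (neg_pos.mpr hy) (mul_pos (neg_pos.mpr hq) (neg_pos.mpr hq))]
  · -- im = 0
    push_neg at hz
    by_cases hx1 : -1 ≤ z.re
    · -- z.re > 1
      have hx : 1 < z.re := hz hy hx1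
      have hzx : z = ((z.re : ℝ) : ℂ) := by
        apply Complex.ext <;> simp [hy]
      have hhalf : ((1:ℂ)/2) = (((1:ℝ)/2 : ℝ) : ℂ) := by norm_num
      have hup : u = (((z.re + 1) ^ ((1:ℝ)/2) : ℝ) : ℂ) := by
        rw [hu_def, hhalf, hzx]
        rw [show ((z.re:ℝ):ℂ) + 1 = (((z.re + 1 : ℝ)):ℂ) by push_cast; ring]
        rw [← Complex.ofReal_cpow (by linarith)]
        simp
      have hvp : v = (((z.re - 1) ^ ((1:ℝ)/2) : ℝ) : ℂ) := by
        rw [hv_def, hhalf, hzx]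
        rw [show ((z.re:ℝ):ℂ) - 1 = (((z.re - 1 : ℝ)):ℂ) by push_cast; ring]
        rw [← Complex.ofReal_cpow (by linarith)]
        simp
      have h1 : (0:ℝ) < (z.re + 1) ^ ((1:ℝ)/2) := Real.rpow_pos_of_pos (by linarith) _
      have h2 : (0:ℝ) < (z.re - 1) ^ ((1:ℝ)/2) := Real.rpow_pos_of_pos (by linarith) _
      rw [hp_def, hq_def, hup, hvp]
      simp only [Complex.ofReal_re, Complex.ofReal_im, hy]
      nlinarith [mul_pos (mul_pos (show (0:ℝ) < z.re by linarith) h1) h2]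
    · -- z.re < -1
      push_neg at hx1
      have hzx : z = ((z.re : ℝ) : ℂ) := by
        apply Complex.ext <;> simp [hy]
      have hI : Complex.exp (Real.pi * Complex.I * ((1:ℂ)/2)) = Complex.I := by
        rw [show (Real.pi : ℂ) * Complex.I * ((1:ℂ)/2) = (((Real.pi/2 : ℝ)):ℂ) * Complex.I by push_cast; ring]
        rw [Complex.exp_mul_I]
        rw [← Complex.ofReal_cos, ← Complex.ofReal_sin]
        simp [Real.cos_pi_div_two, Real.sin_pi_div_two]
      have hhalf : ((1:ℂ)/2) = (((1:ℝ)/2 : ℝ) : ℂ) := by norm_num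
      have hup : u = (((-(z.re + 1)) ^ ((1:ℝ)/2) : ℝ) : ℂ) * Complex.I := by
        rw [hu_def, hzx]
        rw [show ((z.re:ℝ):ℂ) + 1 = (((z.re + 1 : ℝ)):ℂ) by push_cast; ring]
        rw [Complex.ofReal_cpow_of_nonpos (by linarith), hI]
        congr 1
        rw [hhalf, show (-((z.re + 1 : ℝ)):ℂ) = ((-(z.re+1) : ℝ) : ℂ) by push_cast; ring]
        rw [← Complex.ofReal_cpow (by linarith)]
        simp
      have hvp : v = (((-(z.re - 1)) ^ ((1:ℝ)/2) : ℝ) : ℂ) * Complex.I := by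
        rw [hv_def, hzx]
        rw [show ((z.re:ℝ):ℂ) - 1 = (((z.re - 1 : ℝ)):ℂ) by push_cast; ring]
        rw [Complex.ofReal_cpow_of_nonpos (by linarith), hI]
        congr 1
        rw [hhalf, show (-((z.re - 1 : ℝ)):ℂ) = ((-(z.re-1) : ℝ) : ℂ) by push_cast; ring]
        rw [← Complex.ofReal_cpow (by linarith)]
        simp
      have h1 : (0:ℝ) < (-(z.re + 1)) ^ ((1:ℝ)/2) := Real.rpow_pos_of_pos (by linarith) _
      have h2 : (0:ℝ) < (-(z.re - 1)) ^ ((1:ℝ)/2) := Real.rpow_pos_of_pos (by linarith) _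
      rw [hp_def, hq_def, hup, hvp]
      simp only [Complex.mul_re, Complex.mul_im, Complex.I_re, Complex.I_im,
        Complex.ofReal_re, Complex.ofReal_im, hy]
      nlinarith [mul_pos (mul_pos (show (0:ℝ) < -z.re by linarith) h1) h2]
  · -- im > 0
    have hu' := aux_sqrt_pos_im (a := z+1) (by simpa using hy)
    have hv' := aux_sqrt_pos_im (a := z-1) (by simpa using hy)
    rw [← hu_def] at hu'; rw [← hv_def] at hv'
    have hq : 0 < q := by rw [hq_def]; nlinarith [hu'.1, hu'.2, hv'.1, hv'.2]
    nlinarith [hEq, sq_nonneg z.re, sq_nonneg q, mul_pos hy (mul_pos hq hq)]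

lemma aux_I_mul_I : Complex.I * Complex.I = -1 := Complex.I_mul_I

lemma aux_I0 (z w : ℂ) (hw : ‖w‖ < 1) (hw0 : w ≠ 0)
    (hw2 : w*w - 2*z*w + 1 = 0)
    (hzc : ∀ φ:ℝ, z - (Real.cos φ:ℂ) ≠ 0) :
    ∫ φ in (0:ℝ)..(2*Real.pi), 1/(z - (Real.cos φ:ℂ))
      = 2*Real.pi * (2*w/(1-w*w)) := by
  have hw1 : 1 - w*w ≠ 0 := by
    intro h
    have : ‖w*w‖ = 1 := by
      rw [show w*w = 1 - (1 - w*w) by ring, h]; simp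
    rw [norm_mul] at this
    nlinarith [norm_nonneg w]
  have habsexp : ∀ c : ℂ, c.re = 0 → ‖Complex.exp c‖ = 1 := by
    intro c hc; rw [Complex.norm_exp, hc, Real.exp_zero]
  have hne : ∀ c : ℂ, c.re = 0 → 1 - w * Complex.exp c ∈ Complex.slitPlane := by
    intro c hc
    apply Complex.mem_slitPlane_iff.mpr
    left
    have h1 : (w * Complex.exp c).re ≤ ‖w * Complex.exp c‖ := Complex.re_le_norm _
    rw [norm_mul, habsexp c hc] at h1
    simp only [Complex.sub_re, Complex.one_re]
    linarith
  have hne' : ∀ c : ℂ, c.re = 0 → 1 - w * Complex.exp c ≠ 0 := by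
    intro c hc
    exact Complex.slitPlane_ne_zero (hne c hc)
  set F : ℝ → ℂ := fun φ => (2*w/(1-w*w)) * (↑φ
      + Complex.I * Complex.log (1 - w * Complex.exp (Complex.I*φ))
      - Complex.I * Complex.log (1 - w * Complex.exp (-(Complex.I*φ)))) with hF
  have hre1 : ∀ φ:ℝ, (Complex.I*(φ:ℂ)).re = 0 := by intro φ; simp
  have hre2 : ∀ φ:ℝ, (-(Complex.I*(φ:ℂ))).re = 0 := by intro φ; simp
  have hderiv : ∀ φ ∈ Set.uIcc (0:ℝ) (2*Real.pi),
      HasDerivAt F (1/(z - (Real.cos φ:ℂ))) φ := by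
    intro φ _
    have h1 : HasDerivAt (fun t:ℝ => (t:ℂ)) 1 φ := by
      simpa using (hasDerivAt_id φ).ofReal_comp
    have h2 : HasDerivAt (fun t:ℝ => Complex.I*(t:ℂ)) Complex.I φ := by
      simpa using h1.const_mul Complex.I
    have h2' : HasDerivAt (fun t:ℝ => -(Complex.I*(t:ℂ))) (-Complex.I) φ := h2.neg
    have h3 := h2.cexp
    have h3' := h2'.cexp
    have h4 : HasDerivAt (fun t:ℝ => 1 - w * Complex.exp (Complex.I*t))
        (-(w * (Complex.exp (Complex.I*φ) * Complex.I))) φ := by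
      simpa using (h3.const_mul w).const_sub 1
    have h4' : HasDerivAt (fun t:ℝ => 1 - w * Complex.exp (-(Complex.I*t)))
        (-(w * (Complex.exp (-(Complex.I*φ)) * (-Complex.I)))) φ := by
      simpa using (h3'.const_mul w).const_sub 1
    have h5 := h4.clog_real (hne _ (hre1 φ))
    have h5' := h4'.clog_real (hne _ (hre2 φ))
    have h6 := ((h1.add ((h5.const_mul Complex.I))).sub (h5'.const_mul Complex.I)).const_mul
      (2*w/(1-w*w))
    refine h6.congr_deriv ?_; symm
    set a := Complex.exp (Complex.I*(φ:ℂ)) with ha_def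
    set b := Complex.exp (-(Complex.I*(φ:ℂ))) with hb_def
    have hab : a * b = 1 := by
      rw [ha_def, hb_def, ← Complex.exp_add]; simp
    have hna : 1 - w*a ≠ 0 := hne' _ (hre1 φ)
    have hnb : 1 - w*b ≠ 0 := hne' _ (hre2 φ)
    have hcos : (Real.cos φ : ℂ) = (a + b)/2 := by
      rw [Complex.ofReal_cos, Complex.cos, ha_def, hb_def]
      ring_nf
    have hkey : (1 - w*a)*(1 - w*b) = 2*w*(z - (a+b)/2) := by
      linear_combination (w*w) * hab + hw2
    have hzc' : z - (a+b)/2 ≠ 0 := by rw [← hcos]; exact hzc φ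
    have n1 : Complex.I * (-(w * (a * Complex.I)) / (1 - w * a)) = w*a/(1-w*a) := by
      rw [mul_div_assoc']
      congr 1
      linear_combination (-(w*a)) * Complex.I_sq
    have n2 : Complex.I * (-(w * (b * -Complex.I)) / (1 - w * b)) = -(w*b/(1-w*b)) := by
      rw [mul_div_assoc', ← neg_div]
      congr 1
      linear_combination (w*b) * Complex.I_sq
    rw [hcos, n1, n2]
    have sum_eq : (1:ℂ) + w*a/(1-w*a) - -(w*b/(1-w*b)) = (1-w*w)/((1-w*a)*(1-w*b)) := by
      field_simp
      linear_combination (-(w^2)) * hab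
    rw [sum_eq]
    rw [div_mul_div_comm, hkey]
    rw [div_eq_div_iff hzc' (mul_ne_zero hw1 (mul_ne_zero (mul_ne_zero two_ne_zero hw0) hzc'))]
    ring
  have hcont : Continuous (fun φ:ℝ => 1/(z - (Real.cos φ:ℂ))) := by
    apply Continuous.div continuous_const
    · exact continuous_const.sub (Complex.continuous_ofReal.comp Real.continuous_cos)
    · exact hzc
  have := intervalIntegral.integral_eq_sub_of_hasDerivAt hderiv (hcont.intervalIntegrable _ _)
  rw [this]
  have hexp2pi : Complex.exp (Complex.I*((2*Real.pi:ℝ):ℂ)) = 1 := by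
    rw [show Complex.I*((2*Real.pi:ℝ):ℂ) = 2*(Real.pi:ℂ)*Complex.I by push_cast; ring]
    exact Complex.exp_two_pi_mul_I
  have hexp2pi' : Complex.exp (-(Complex.I*((2*Real.pi:ℝ):ℂ))) = 1 := by
    rw [Complex.exp_neg, hexp2pi, inv_one]
  rw [hF]
  simp only [Complex.ofReal_mul, Complex.ofReal_ofNat]
  rw [show Complex.I*((2:ℂ)*(Real.pi:ℂ)) = Complex.I*((2*Real.pi:ℝ):ℂ) by push_cast; ring]
  rw [hexp2pi, hexp2pi']
  push_cast
  simp only [mul_zero, Complex.exp_zero, neg_zero, mul_one]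
  ring

lemma aux_Icos (k : ℕ) (hk : 1 ≤ k) :
    ∫ φ in (0:ℝ)..(2*Real.pi), ((Real.cos ((k:ℝ)*φ) : ℝ) : ℂ) = 0 := by
  rw [intervalIntegral.integral_ofReal]
  have hk0 : (k:ℝ) ≠ 0 := by positivity
  have : (∫ φ in (0:ℝ)..(2*Real.pi), Real.cos ((k:ℝ)*φ)) = 0 := by
    rw [intervalIntegral.integral_comp_mul_left Real.cos hk0]
    rw [integral_cos]
    rw [mul_zero, show (k:ℝ)*(2*Real.pi) = (2*k:ℕ)*Real.pi by push_cast; ring]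
    rw [Real.sin_nat_mul_pi, Real.sin_zero]
    simp
  rw [this, Complex.ofReal_zero]


end AuxPClosedForm

theorem P_closed_form_and_limit
    (z : ℂ) (hz : z ∉ {w : ℂ | w.im = 0 ∧ w.re ∈ Set.Icc (-1:ℝ) 1})
    (P : ℕ → ℂ)
    (hP : ∀ m : ℕ, P m = (1 / (2 * Real.pi)) *
      ∫ φ in (0:ℝ)..(2 * Real.pi), (Real.cos (m * φ) : ℂ) / (z - (Real.cos φ : ℂ))) :
    (∀ m : ℕ, P m =
      (z - (z + 1) ^ ((1:ℂ)/2) * (z - 1) ^ ((1:ℂ)/2)) ^ m /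
        ((z + 1) ^ ((1:ℂ)/2) * (z - 1) ^ ((1:ℂ)/2))) ∧
    Tendsto P atTop (nhds 0) := by
  simp only [Set.mem_setOf_eq, Set.mem_Icc] at hz
  have hpos := aux_re_pos z (by tauto)
  set s := (z+1)^((1:ℂ)/2) * (z-1)^((1:ℂ)/2) with hs_def
  have hp1 : z + 1 ≠ 0 := by
    intro h
    have : z = -1 := by linear_combination h
    apply hz; rw [this]; norm_num
  have hm1 : z - 1 ≠ 0 := by
    intro h
    have : z = 1 := by linear_combination h
    apply hz; rw [this]; norm_num
  have hss : s*s = z*z - 1 := by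
    have h1 := aux_sqrt_sq hp1
    have h2 := aux_sqrt_sq hm1
    calc s*s = ((z+1)^((1:ℂ)/2) * (z+1)^((1:ℂ)/2))*((z-1)^((1:ℂ)/2) * (z-1)^((1:ℂ)/2)) := by
          rw [hs_def]; ring
      _ = (z+1)*(z-1) := by rw [h1, h2]
      _ = z*z - 1 := by ring
  have hprod : (z - s)*(z + s) = 1 := by linear_combination -hss
  set w := z - s with hw_def
  have hw0 : w ≠ 0 := left_ne_zero_of_mul_eq_one hprod
  have hs0 : s ≠ 0 := by
    intro h
    rw [h] at hss
    exact mul_ne_zero hm1 hp1 (by linear_combination -hss)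
  have hw2 : w*w - 2*z*w + 1 = 0 := by rw [hw_def]; linear_combination hss
  have habs : ‖w‖ < 1 := by
    have h4 : Complex.normSq (z+s) - Complex.normSq (z-s)
        = 4*(z.re*s.re + z.im*s.im) := by
      simp only [Complex.normSq_apply, Complex.add_re, Complex.add_im,
        Complex.sub_re, Complex.sub_im]
      ring
    have hlt : ‖z-s‖ < ‖z+s‖ := by
      have h5 : ‖z-s‖^2 < ‖z+s‖^2 := by
        rw [Complex.sq_norm, Complex.sq_norm]; linarith
      exact lt_of_pow_lt_pow_left₀ 2 (norm_nonneg _) h5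
    have habs1 : ‖z-s‖ * ‖z+s‖ = 1 := by
      rw [← norm_mul, hprod, norm_one]
    rw [hw_def]
    nlinarith [norm_nonneg (z-s)]
  have hzc : ∀ φ:ℝ, z - (Real.cos φ:ℂ) ≠ 0 := by
    intro φ h
    apply hz
    have hzr : z = ((Real.cos φ:ℝ):ℂ) := by linear_combination h
    rw [hzr]
    refine ⟨Complex.ofReal_im _, ?_, ?_⟩ <;> rw [Complex.ofReal_re]
    · exact Real.neg_one_le_cos φ
    · exact Real.cos_le_one φ
  have hsw : 1 - w*w = 2*w*s := by rw [hw_def]; linear_combination hss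
  have hI0 := aux_I0 z w habs hw0 hw2 hzc
  have hcont : ∀ k:ℕ, Continuous (fun φ:ℝ => (Real.cos ((k:ℝ)*φ):ℂ)/(z - (Real.cos φ:ℂ))) := by
    intro k
    apply Continuous.div
    · exact Complex.continuous_ofReal.comp (Real.continuous_cos.comp (continuous_const.mul continuous_id))
    · exact continuous_const.sub (Complex.continuous_ofReal.comp Real.continuous_cos)
    · exact hzc
  have hcont1 : Continuous (fun φ:ℝ => (1:ℂ)/(z - (Real.cos φ:ℂ))) := by
    apply Continuous.div continuous_const
    · exact continuous_const.sub (Complex.continuous_ofReal.comp Real.continuous_cos)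
    · exact hzc
  have hcontc : ∀ k:ℕ, Continuous (fun φ:ℝ => (Real.cos ((k:ℝ)*φ):ℂ)) := by
    intro k
    exact Complex.continuous_ofReal.comp (Real.continuous_cos.comp (continuous_const.mul continuous_id))
  have key : ∀ m:ℕ, (∫ φ in (0:ℝ)..(2*Real.pi), (Real.cos ((m:ℝ)*φ):ℂ)/(z - (Real.cos φ:ℂ)))
      = 2*Real.pi*w^m/s := by
    intro m
    induction m using Nat.strong_induction_on with
    | _ m ih =>
      match m with
      | 0 =>
        simp only [Nat.cast_zero, zero_mul, Real.cos_zero, Complex.ofReal_one, pow_zero]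
        rw [hI0, hsw]
        field_simp
      | 1 =>
        have hpt : ∀ φ:ℝ, (Real.cos (((1:ℕ):ℝ)*φ):ℂ)/(z - (Real.cos φ:ℂ))
            = z * ((1:ℂ)/(z - (Real.cos φ:ℂ))) - 1 := by
          intro φ
          have hc := hzc φ
          have hc2 : z - Complex.cos (φ:ℂ) ≠ 0 := by rwa [← Complex.ofReal_cos]
          rw [Nat.cast_one, one_mul]
          field_simp [hc2]
          ring
        rw [intervalIntegral.integral_congr (g := fun φ:ℝ => z * ((1:ℂ)/(z - (Real.cos φ:ℂ))) - 1)
          (fun φ _ => hpt φ)]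
        rw [intervalIntegral.integral_sub (Continuous.intervalIntegrable (by exact continuous_const.mul hcont1) _ _)
          (continuous_const.intervalIntegrable _ _)]
        rw [intervalIntegral.integral_const_mul, hI0]
        rw [intervalIntegral.integral_const]
        rw [hsw]
        simp only [sub_zero, Complex.real_smul, Complex.ofReal_mul, Complex.ofReal_ofNat, mul_one, pow_one]
        field_simp
        linear_combination (4*Real.pi*w) * hw_def
      | (n+2) =>
        have trig : ∀ x φ:ℝ, Real.cos ((x+2)*φ) = 2*Real.cos φ*Real.cos ((x+1)*φ) - Real.cos (x*φ) := by
          intro x φ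
          have h1 := Real.cos_add ((x+1)*φ) φ
          have h2 := Real.cos_sub ((x+1)*φ) φ
          rw [show (x+1)*φ + φ = (x+2)*φ by ring] at h1
          rw [show (x+1)*φ - φ = x*φ by ring] at h2
          linarith
        have hpt : ∀ φ:ℝ, (Real.cos ((((n+2):ℕ):ℝ)*φ):ℂ)/(z - (Real.cos φ:ℂ))
            = 2*z*((Real.cos ((((n+1):ℕ):ℝ)*φ):ℂ)/(z - (Real.cos φ:ℂ)))
              - 2*(Real.cos ((((n+1):ℕ):ℝ)*φ):ℂ)
              - (Real.cos (((n:ℕ):ℝ)*φ):ℂ)/(z - (Real.cos φ:ℂ)) := by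
          intro φ
          have hc := hzc φ
          have hc2 : z - Complex.cos (φ:ℂ) ≠ 0 := by rwa [← Complex.ofReal_cos]
          have h := trig (n:ℝ) φ
          have hC : (Real.cos (((n:ℝ)+2)*φ) : ℂ)
              = 2*(Real.cos φ:ℂ)*(Real.cos (((n:ℝ)+1)*φ):ℂ) - (Real.cos ((n:ℝ)*φ):ℂ) := by
            rw [h]; push_cast; ring
          push_cast
          push_cast at hC
          field_simp [hc2]
          linear_combination (norm := ring_nf) hC
        rw [intervalIntegral.integral_congr (fun φ _ => hpt φ)]
        rw [intervalIntegral.integral_sub (Continuous.intervalIntegrable (by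
              exact (continuous_const.mul (hcont (n+1))).sub (continuous_const.mul (hcontc (n+1)))) _ _)
          ((hcont n).intervalIntegrable _ _)]
        rw [intervalIntegral.integral_sub (Continuous.intervalIntegrable (by exact continuous_const.mul (hcont (n+1))) _ _)
          (Continuous.intervalIntegrable (by exact continuous_const.mul (hcontc (n+1))) _ _)]
        rw [intervalIntegral.integral_const_mul, intervalIntegral.integral_const_mul]
        rw [ih n (by omega), ih (n+1) (by omega), aux_Icos (n+1) (by omega)]
        field_simp
        linear_combination (2*Real.pi*w^n) * hw2 - (3*Real.pi*w^n) * hss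
  have hfirst : ∀ m:ℕ, P m = w^m / s := by
    intro m
    rw [hP m, key m]
    have hpi : (Real.pi:ℂ) ≠ 0 := Complex.ofReal_ne_zero.mpr Real.pi_ne_zero
    field_simp
  refine ⟨hfirst, ?_⟩
  have h1 : Tendsto (fun m:ℕ => w^m) atTop (nhds 0) :=
    tendsto_pow_atTop_nhds_zero_of_norm_lt_one (by exact habs)
  have h2 := h1.div_const s
  rw [zero_div] at h2
  exact h2.congr (fun m => (hfirst m).symm)
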